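/- If x ≺ y for nonnegative vectors with nonincreasing components, then there exists an upper triangular row-stochastic matrix U with at most 2n−1 nonzero entries such that x = yU. -/

import Mathlib

open Finset Matrix

/-- Prefix sum of the first `k` components. -/
def psum {n : ℕ} (x : Fin n → ℝ) (k : ℕ) : ℝ :=
  ∑ i ∈ Finset.filter (fun i : Fin n => (i : ℕ) < k) Finset.univ, x i

/-- `x` is majorized by `y` (both assumed sorted nonincreasingly). -/
def Maj {n : ℕ} (x y : Fin n → ℝ) : Prop :=
  (∀ k, k < n → psum x k ≤ psum y k) ∧ (∑ i, x i) = ∑ i, y i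

/-- An A-transform: for `i < j` and `λ ∈ [0,1]`, replace `x i` by `x i + λ * x j`
and `x j` by `(1 - λ) * x j`. -/
def ATrans {n : ℕ} (x x' : Fin n → ℝ) : Prop :=
  ∃ (i j : Fin n) (lam : ℝ), i < j ∧ 0 ≤ lam ∧ lam ≤ 1 ∧
    x' = Function.update (Function.update x i (x i + lam * x j)) j ((1 - lam) * x j)

/-- A B-transform: for `i < j` and `λ ∈ [0,1]`, replace `y i` by `(1 - λ) * y i`
and `y j` by `y j + λ * y i`. -/
def BTrans {n : ℕ} (y y' : Fin n → ℝ) : Prop :=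
  ∃ (i j : Fin n) (lam : ℝ), i < j ∧ 0 ≤ lam ∧ lam ≤ 1 ∧
    y' = Function.update (Function.update y i ((1 - lam) * y i)) j (y j + lam * y i)

/-- Lower triangular row-stochastic matrix. -/
def LowerRS {n : ℕ} (L : Matrix (Fin n) (Fin n) ℝ) : Prop :=
  (∀ i j, 0 ≤ L i j) ∧ (∀ i j : Fin n, i < j → L i j = 0) ∧ (∀ i, ∑ j, L i j = 1)

/-- Upper triangular row-stochastic matrix. -/
def UpperRS {n : ℕ} (U : Matrix (Fin n) (Fin n) ℝ) : Prop :=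
  (∀ i j, 0 ≤ U i j) ∧ (∀ i j : Fin n, j < i → U i j = 0) ∧ (∀ i, ∑ j, U i j = 1)


lemma psum_zero' {n : ℕ} (x : Fin n → ℝ) : psum x 0 = 0 := by simp [psum]

lemma psum_nonneg' {n : ℕ} (x : Fin n → ℝ) (hx : ∀ i, 0 ≤ x i) (k : ℕ) : 0 ≤ psum x k :=
  Finset.sum_nonneg fun i _ => hx i

lemma psum_succ' {n : ℕ} (x : Fin n → ℝ) (k : ℕ) (hk : k < n) :
    psum x (k + 1) = psum x k + x ⟨k, hk⟩ := by
  unfold psum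
  rw [show Finset.filter (fun i : Fin n => (i : ℕ) < k + 1) Finset.univ
      = insert ⟨k, hk⟩ (Finset.filter (fun i : Fin n => (i : ℕ) < k) Finset.univ) from ?_]
  · rw [Finset.sum_insert (by simp), add_comm]
  · ext i
    simp [Nat.lt_succ_iff_lt_or_eq, Fin.ext_iff, or_comm]
    omega

lemma psum_of_le' {n : ℕ} (x : Fin n → ℝ) (k : ℕ) (hk : n ≤ k) :
    psum x k = ∑ i, x i := by
  unfold psum
  rw [Finset.filter_true_of_mem fun i _ => lt_of_lt_of_le i.isLt hk]

lemma psum_mono' {n : ℕ} (x : Fin n → ℝ) (hx : ∀ i, 0 ≤ x i) : Monotone (psum x) := by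
  intro k l hkl
  apply Finset.sum_le_sum_of_subset_of_nonneg
  · intro i
    simp only [Finset.mem_filter]
    exact fun ⟨_, h⟩ => ⟨Finset.mem_univ i, lt_of_lt_of_le h hkl⟩
  · exact fun i _ _ => hx i


noncomputable def nwm (S T : ℕ → ℝ) (i j : ℕ) : ℝ :=
  max 0 (min (S (i+1)) (T (j+1)) - max (S i) (T j))

lemma overlap_aux (a b c d : ℝ) (hab : a ≤ b) (hcd : c ≤ d) :
    max 0 (min b d - max a c) = (min b d - min b c) - (min a d - min a c) := by
  rcases le_total a c with h1 | h1 <;> rcases le_total b d with h2 | h2 <;>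
    rcases le_total b c with h3 | h3 <;> rcases le_total a d with h4 | h4 <;>
    simp [min_def, max_def] <;> split_ifs <;> linarith

lemma nwm_nonneg (S T : ℕ → ℝ) (i j : ℕ) : 0 ≤ nwm S T i j := le_max_left _ _

lemma nwm_ne_zero (S T : ℕ → ℝ) {i j : ℕ} (h : nwm S T i j ≠ 0) :
    max (S i) (T j) < min (S (i+1)) (T (j+1)) := by
  by_contra hc
  apply h
  unfold nwm
  exact max_eq_left (by linarith [not_lt.mp hc])

lemma nwm_le (S T : ℕ → ℝ) (i j : ℕ) (h : S i ≤ S (i+1)) :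
    nwm S T i j ≤ S (i+1) - S i := by
  apply max_le (by linarith)
  have := min_le_left (S (i+1)) (T (j+1))
  have := le_max_left (S i) (T j)
  linarith

lemma nwm_row_sum (S T : ℕ → ℝ) (hT : Monotone T) (hT0 : T 0 = 0) (n i : ℕ)
    (hSnn : 0 ≤ S i) (hSnn' : 0 ≤ S (i+1)) (hab : S i ≤ S (i+1))
    (h1 : S (i+1) ≤ T n) (h0 : S i ≤ T n) :
    ∑ j ∈ Finset.range n, nwm S T i j = S (i+1) - S i := by
  have hcongr : ∀ j ∈ Finset.range n, nwm S T i j =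
      (fun t => min (S (i+1)) (T t) - min (S i) (T t)) (j+1) -
      (fun t => min (S (i+1)) (T t) - min (S i) (T t)) j := by
    intro j _
    have := overlap_aux (S i) (S (i+1)) (T j) (T (j+1)) hab (hT (Nat.le_succ j))
    simp only [nwm, this]; ring
  rw [Finset.sum_congr rfl hcongr,
    Finset.sum_range_sub (fun t => min (S (i+1)) (T t) - min (S i) (T t))]
  simp only [hT0]
  rw [min_eq_left h1, min_eq_left h0, min_eq_right hSnn', min_eq_right hSnn]
  ring

lemma nwm_col_sum (S T : ℕ → ℝ) (hS : Monotone S) (hS0 : S 0 = 0) (n j : ℕ)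
    (hTnn : 0 ≤ T j) (hTnn' : 0 ≤ T (j+1)) (hcd : T j ≤ T (j+1))
    (h1 : T (j+1) ≤ S n) (h0 : T j ≤ S n) :
    ∑ i ∈ Finset.range n, nwm S T i j = T (j+1) - T j := by
  have hcongr : ∀ i ∈ Finset.range n, nwm S T i j =
      (fun t => min (S t) (T (j+1)) - min (S t) (T j)) (i+1) -
      (fun t => min (S t) (T (j+1)) - min (S t) (T j)) i := by
    intro i _
    have := overlap_aux (T j) (T (j+1)) (S i) (S (i+1)) hcd (hS (Nat.le_succ i))
    simp only [nwm]
    rw [min_comm (S (i+1)) (T (j+1)), max_comm (S i) (T j), this]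
    rw [min_comm (T (j+1)) (S (i+1)), min_comm (T (j+1)) (S i),
      min_comm (T j) (S (i+1)), min_comm (T j) (S i)]
    ring
  rw [Finset.sum_congr rfl hcongr,
    Finset.sum_range_sub (fun t => min (S t) (T (j+1)) - min (S t) (T j))]
  simp only [hS0]
  rw [min_eq_right h1, min_eq_right h0, min_eq_left hTnn', min_eq_left hTnn]
  ring

theorem stmt14 {n : ℕ} (x y : Fin n → ℝ)
    (hx0 : ∀ i, 0 ≤ x i) (hy0 : ∀ i, 0 ≤ y i)
    (hxs : Antitone x) (hys : Antitone y)
    (hmaj : Maj x y) :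
    ∃ U : Matrix (Fin n) (Fin n) ℝ, UpperRS U ∧
      (Finset.filter (fun p : Fin n × Fin n => U p.1 p.2 ≠ 0) Finset.univ).card ≤ 2 * n - 1 ∧
      x = Matrix.vecMul y U := by
  classical
  set S : ℕ → ℝ := psum y with hSdef
  set T : ℕ → ℝ := psum x with hTdef
  have hSmono : Monotone S := psum_mono' y hy0
  have hTmono : Monotone T := psum_mono' x hx0
  have hSnn : ∀ k, 0 ≤ S k := psum_nonneg' y hy0
  have hTnn : ∀ k, 0 ≤ T k := psum_nonneg' x hx0
  have hS0 : S 0 = 0 := psum_zero' y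
  have hT0 : T 0 = 0 := psum_zero' x
  have hTn : T n = S n := by
    rw [hSdef, hTdef, psum_of_le' x n le_rfl, psum_of_le' y n le_rfl, hmaj.2]
  have hTS : ∀ k, T k ≤ S k := by
    intro k
    by_cases hk : k < n
    · exact hmaj.1 k hk
    · rw [hSdef, hTdef, psum_of_le' x k (le_of_not_gt hk), psum_of_le' y k (le_of_not_gt hk),
        hmaj.2]
  have hSi : ∀ i : Fin n, S ((i : ℕ) + 1) = S i + y i := by
    intro i
    rw [hSdef, psum_succ' y i i.isLt]
  have hTj : ∀ j : Fin n, T ((j : ℕ) + 1) = T j + x j := by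
    intro j
    rw [hTdef, psum_succ' x j j.isLt]
  set m : ℕ → ℕ → ℝ := nwm S T with hmdef
  -- m vanishes when y i = 0
  have hmz : ∀ i : Fin n, y i = 0 → ∀ j : ℕ, m i j = 0 := by
    intro i hyi j
    have h1 := nwm_nonneg S T i j
    have h2 := nwm_le S T i j (hSmono (Nat.le_succ _))
    have := hSi i
    rw [hyi] at this
    rw [hmdef]
    linarith [h2, this.le, this.ge]
  -- triangularity of m
  have hmtri : ∀ i j : Fin n, j < i → m i j = 0 := by
    intro i j hji
    by_contra hne
    have h := nwm_ne_zero S T (hmdef ▸ hne)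
    have h1 : T ((j : ℕ) + 1) ≤ S ((j : ℕ) + 1) := hTS _
    have h2 : S ((j : ℕ) + 1) ≤ S i := hSmono (by exact_mod_cast hji)
    have h3 := min_le_right (S ((i:ℕ)+1)) (T ((j:ℕ)+1))
    have h4 := le_max_left (S (i:ℕ)) (T (j:ℕ))
    linarith
  -- row sums of m
  have hrow : ∀ i : Fin n, (∑ j : Fin n, m i j) = y i := by
    intro i
    have hb : (i : ℕ) + 1 ≤ n := i.isLt
    rw [Fin.sum_univ_eq_sum_range (fun j => m (i : ℕ) j) n, hmdef]
    rw [nwm_row_sum S T hTmono hT0 n i (hSnn _) (hSnn _) (hSmono (Nat.le_succ _))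
      (hTn ▸ hSmono hb) (hTn ▸ hSmono (le_of_lt i.isLt))]
    rw [hSi i]; ring
  -- column sums of m
  have hcol : ∀ j : Fin n, (∑ i : Fin n, m i j) = x j := by
    intro j
    have hb : (j : ℕ) + 1 ≤ n := j.isLt
    rw [Fin.sum_univ_eq_sum_range (fun i => m i (j : ℕ)) n, hmdef]
    rw [nwm_col_sum S T hSmono hS0 n j (hTnn _) (hTnn _) (hTmono (Nat.le_succ _))
      (le_trans (hTmono hb) hTn.le) (le_trans (hTmono (le_of_lt j.isLt)) hTn.le)]
    rw [hTj j]; ring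
  set U : Matrix (Fin n) (Fin n) ℝ :=
    fun i j => if y i = 0 then (if i = j then 1 else 0) else m i j / y i with hUdef
  -- key: y i * U i j = m i j
  have hyU : ∀ i j : Fin n, y i * U i j = m i j := by
    intro i j
    by_cases hyi : y i = 0
    · rw [hUdef]
      simp only [hyi, if_true]
      rw [hmz i hyi j, zero_mul]
    · rw [hUdef]
      simp only [hyi, if_false]
      field_simp
  have hUne : ∀ i j : Fin n, U i j ≠ 0 → y i ≠ 0 → m i j ≠ 0 := by
    intro i j hU hy
    intro hmz'
    apply hU
    rw [hUdef]
    simp only [hy, if_false, hmz', zero_div]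
  refine ⟨U, ⟨?_, ?_, ?_⟩, ?_, ?_⟩
  · -- nonneg
    intro i j
    rw [hUdef]
    by_cases hyi : y i = 0
    · simp only [hyi, if_true]
      split_ifs <;> norm_num
    · simp only [hyi, if_false]
      exact div_nonneg (nwm_nonneg S T i j) (hy0 i)
  · -- upper triangular
    intro i j hji
    rw [hUdef]
    by_cases hyi : y i = 0
    · simp only [hyi, if_true]
      have : i ≠ j := ne_of_gt hji
      simp [this]
    · simp only [hyi, if_false]
      rw [hmtri i j hji, zero_div]
  · -- row sums 1
    intro i
    by_cases hyi : y i = 0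
    · rw [hUdef]
      simp [hyi]
    · have heq : ∑ j, U i j = (∑ j : Fin n, m (i : ℕ) (j : ℕ)) / y i := by
        rw [Finset.sum_div]
        apply Finset.sum_congr rfl
        intro j _
        rw [hUdef]
        simp [hyi]
      rw [heq, hrow i, div_self hyi]
  · -- cardinality
    rcases Nat.eq_zero_or_pos n with hn | hn
    · subst hn
      simp
    · set Fst : Fin n × Fin n → Prop := fun p => ∀ j' : Fin n, j' < p.2 → U p.1 j' = 0
        with hFst
      set N := Finset.filter (fun p : Fin n × Fin n => U p.1 p.2 ≠ 0) Finset.univ with hNdef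
      have key1 : ∀ p : Fin n × Fin n, U p.1 p.2 ≠ 0 → ¬ Fst p →
          y p.1 ≠ 0 ∧ S (p.1 : ℕ) < T (p.2 : ℕ) := by
        intro p hU hF
        obtain ⟨j', hj'⟩ := not_forall.mp hF
        obtain ⟨hj'lt, hj'ne⟩ := Classical.not_imp.mp hj' 
        have hy : y p.1 ≠ 0 := by
          intro hy0'
          have h1 : p.1 = j' := by
            by_contra hne
            apply hj'ne
            rw [hUdef]; simp [hy0', hne]
          have h2 : p.1 = p.2 := by
            by_contra hne
            apply hU
            rw [hUdef]; simp [hy0', hne]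
          rw [← h1, ← h2] at hj'lt
          exact lt_irrefl _ hj'lt
        refine ⟨hy, ?_⟩
        have hm' : m (p.1 : ℕ) (j' : ℕ) ≠ 0 := hUne _ _ hj'ne hy
        have h := nwm_ne_zero S T (hmdef ▸ hm')
        have h1 := le_max_left (S (p.1 : ℕ)) (T (j' : ℕ))
        have h2 := min_le_right (S ((p.1 : ℕ) + 1)) (T ((j' : ℕ) + 1))
        have h3 : T ((j' : ℕ) + 1) ≤ T (p.2 : ℕ) := hTmono (by exact_mod_cast hj'lt)
        linarith
      have key2 : ∀ p : Fin n × Fin n, U p.1 p.2 ≠ 0 → y p.1 ≠ 0 →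
          T (p.2 : ℕ) < S ((p.1 : ℕ) + 1) := by
        intro p hU hy
        have hm' : m (p.1 : ℕ) (p.2 : ℕ) ≠ 0 := hUne _ _ hU hy
        have h := nwm_ne_zero S T (hmdef ▸ hm')
        have h1 := le_max_right (S (p.1 : ℕ)) (T (p.2 : ℕ))
        have h2 := min_le_left (S ((p.1 : ℕ) + 1)) (T ((p.2 : ℕ) + 1))
        linarith
      have hsplit := Finset.card_filter_add_card_filter_not (s := N) (p := Fst)
      have hone : (N.filter Fst).card ≤ n := by
        have hinj : Set.InjOn (fun p : Fin n × Fin n => p.1) ↑(N.filter Fst) := by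
          intro p hp q hq hpq
          simp only [hNdef, Finset.coe_filter, Set.mem_setOf_eq, Finset.mem_filter,
            Finset.mem_univ, true_and] at hp hq
          obtain ⟨hpU, hpF⟩ := hp
          obtain ⟨hqU, hqF⟩ := hq
          simp only at hpq
          have h2 : p.2 = q.2 := by
            by_contra hne
            rcases lt_or_gt_of_ne hne with h | h
            · have := hqF p.2 h
              rw [← hpq] at this
              exact hpU this
            · have := hpF q.2 h
              rw [hpq] at this
              exact hqU this
          exact Prod.ext hpq h2
        calc (N.filter Fst).card ≤ (Finset.univ : Finset (Fin n)).card :=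
              Finset.card_le_card_of_injOn _ (fun p _ => Finset.mem_univ p.1) hinj
          _ = n := by simp
      have htwo : (N.filter fun p => ¬ Fst p).card ≤ n - 1 := by
        have hcard : (Finset.univ.erase (⟨0, hn⟩ : Fin n)).card = n - 1 := by
          rw [Finset.card_erase_of_mem (Finset.mem_univ _), Finset.card_univ, Fintype.card_fin]
        rw [← hcard]
        apply Finset.card_le_card_of_injOn (fun p => p.2)
        · intro p hp
          simp only [hNdef, Finset.mem_coe, Finset.mem_filter, Finset.mem_univ, true_and] at hp
          obtain ⟨hpU, hpF⟩ := hp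
          rw [Finset.mem_coe, Finset.mem_erase]
          refine ⟨?_, Finset.mem_univ _⟩
          obtain ⟨j', hj'⟩ := not_forall.mp hpF
          obtain ⟨hj'lt, -⟩ := Classical.not_imp.mp hj' 
          intro h0
          rw [show p.2 = _ from h0] at hj'lt
          exact absurd hj'lt (by simp [Fin.lt_def])
        · intro p hp q hq hpq
          simp only [hNdef, Finset.coe_filter, Set.mem_setOf_eq, Finset.mem_filter,
            Finset.mem_univ, true_and] at hp hq
          obtain ⟨hpU, hpF⟩ := hp
          obtain ⟨hqU, hqF⟩ := hq
          simp only at hpq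
          have h1' : p.1 = q.1 := by
            by_contra hne
            rcases lt_or_gt_of_ne hne with h | h
            · have hk1 := (key1 q hqU hqF).2
              have hk2 := key2 p hpU (key1 p hpU hpF).1
              have hle : ((p.1 : ℕ) + 1) ≤ (q.1 : ℕ) := by
                have : (p.1 : ℕ) < (q.1 : ℕ) := by exact_mod_cast h
                omega
              have hmm := hSmono hle
              rw [hpq] at hk2
              linarith
            · have hk1 := (key1 p hpU hpF).2
              have hk2 := key2 q hqU (key1 q hqU hqF).1
              have hle : ((q.1 : ℕ) + 1) ≤ (p.1 : ℕ) := by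
                have : (q.1 : ℕ) < (p.1 : ℕ) := by exact_mod_cast h
                omega
              have hmm := hSmono hle
              rw [← hpq] at hk2
              linarith
          exact Prod.ext h1' hpq
      omega
  · -- x = y ᵥ* U
    funext j
    rw [Matrix.vecMul, dotProduct]
    rw [Finset.sum_congr rfl fun i _ => hyU i j]
    exact (hcol j).symm
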